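/- Let C : ℝⁿ → ℝ be differentiable with L-Lipschitz gradient, let U be a random vector with ‖U‖ = r a.s., and let G = (d/(2r²))(C(K+U) − C(K−U))·U for a constant d ≥ 1. Then E‖G‖² ≤ 8d²(Lr)² + 2d²‖∇C(K)‖². -/

import Mathlib

open MeasureTheory

set_option maxHeartbeats 1000000 in
/-- Second-moment bound for the single-sample two-point zeroth-order
estimator `G = (d/(2r²))(C(K+U) − C(K−U))·U`:
`E‖G‖² ≤ 8d²(Lr)² + 2d²‖∇C(K)‖²`. -/
theorem stmt_8 {Ω : Type*} [MeasurableSpace Ω] (μ : Measure Ω) [IsProbabilityMeasure μ]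
    {n : ℕ} (C : EuclideanSpace ℝ (Fin n) → ℝ) (L d r : ℝ)
    (hL : 0 ≤ L) (hd : 1 ≤ d) (hr : 0 < r)
    (hdiff : Differentiable ℝ C)
    (hLip : ∀ x y, ‖gradient C x - gradient C y‖ ≤ L * ‖x - y‖)
    (U : Ω → EuclideanSpace ℝ (Fin n))
    (hU : ∀ᵐ ω ∂μ, ‖U ω‖ = r)
    (K : EuclideanSpace ℝ (Fin n))
    (G : Ω → EuclideanSpace ℝ (Fin n))
    (hG : ∀ ω, G ω = (d / (2 * r ^ 2) * (C (K + U ω) - C (K - U ω))) • U ω)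
    (hint : Integrable (fun ω => ‖G ω‖ ^ 2) μ) :
    ∫ ω, ‖G ω‖ ^ 2 ∂μ ≤ 8 * d ^ 2 * (L * r) ^ 2 + 2 * d ^ 2 * ‖gradient C K‖ ^ 2 := by
  set g := gradient C K with hgdef
  set φ : EuclideanSpace ℝ (Fin n) →L[ℝ] ℝ :=
    (InnerProductSpace.toDual ℝ (EuclideanSpace ℝ (Fin n)) g :
      EuclideanSpace ℝ (Fin n) →L[ℝ] ℝ) with hφ
  set f : EuclideanSpace ℝ (Fin n) → ℝ := fun x => C x - φ x with hfdef
  have hfdiff : ∀ x, HasFDerivAt f (fderiv ℝ C x - φ) x :=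
    fun x => ((hdiff x).hasFDerivAt).sub (φ.hasFDerivAt)
  have hφK : φ = fderiv ℝ C K := by
    rw [hφ, hgdef]
    simp only [gradient]
    exact (InnerProductSpace.toDual ℝ _).apply_symm_apply _
  -- norm of the derivative of f
  have hnorm : ∀ x, ‖fderiv ℝ C x - φ‖ = ‖gradient C x - g‖ := by
    intro x
    rw [hφK]
    have h : gradient C x - g = (InnerProductSpace.toDual ℝ (EuclideanSpace ℝ (Fin n))).symm
        (fderiv ℝ C x - fderiv ℝ C K) := by
      simp [gradient, hgdef, map_sub]
    rw [h, LinearIsometryEquiv.norm_map]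
  have hball : Convex ℝ (Metric.closedBall K r) := convex_closedBall K r
  have hbound : ∀ x ∈ Metric.closedBall K r, ‖fderiv ℝ f x‖ ≤ L * r := by
    intro x hx
    rw [(hfdiff x).fderiv, hnorm x]
    calc ‖gradient C x - g‖ ≤ L * ‖x - K‖ := hLip x K
      _ ≤ L * r := by
          have hx' := Metric.mem_closedBall.mp hx
          rw [dist_eq_norm] at hx'
          nlinarith
  have hfdiffAt : ∀ x ∈ Metric.closedBall K r, DifferentiableAt ℝ f x :=
    fun x _ => (hfdiff x).differentiableAt
  -- pointwise a.e. bound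
  have hkey : ∀ᵐ ω ∂μ, ‖G ω‖ ^ 2 ≤ 8 * d ^ 2 * (L * r) ^ 2 + 2 * d ^ 2 * ‖g‖ ^ 2 := by
    filter_upwards [hU] with ω hω
    have hmemK : K ∈ Metric.closedBall K r := Metric.mem_closedBall_self hr.le
    have hmem1 : K + U ω ∈ Metric.closedBall K r := by
      rw [Metric.mem_closedBall, dist_eq_norm]
      have h : K + U ω - K = U ω := by abel
      rw [h, hω]
    have hmem2 : K - U ω ∈ Metric.closedBall K r := by
      rw [Metric.mem_closedBall, dist_eq_norm]
      have h : K - U ω - K = -U ω := by abel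
      rw [h, norm_neg, hω]
    have h1 : ‖f (K + U ω) - f K‖ ≤ (L * r) * ‖(K + U ω) - K‖ :=
      hball.norm_image_sub_le_of_norm_fderiv_le hfdiffAt hbound hmemK hmem1
    have h2 : ‖f (K - U ω) - f K‖ ≤ (L * r) * ‖(K - U ω) - K‖ :=
      hball.norm_image_sub_le_of_norm_fderiv_le hfdiffAt hbound hmemK hmem2
    have e1 : ‖(K + U ω) - K‖ = r := by
      have h : K + U ω - K = U ω := by abel
      rw [h, hω]
    have e2 : ‖(K - U ω) - K‖ = r := by
      have h : K - U ω - K = -U ω := by abel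
      rw [h, norm_neg, hω]
    rw [e1] at h1; rw [e2] at h2
    -- difference of the inner-product terms
    have hφu : φ (K + U ω) - φ (K - U ω) = 2 * (inner ℝ g (U ω) : ℝ) := by
      have h : φ (K + U ω) - φ (K - U ω) = φ ((K + U ω) - (K - U ω)) :=
        (map_sub φ _ _).symm
      rw [h]
      have h2' : (K + U ω) - (K - U ω) = (2 : ℝ) • U ω := by
        rw [two_smul]; abel
      rw [h2', φ.map_smul]
      simp [hφ, InnerProductSpace.toDual_apply_apply, smul_eq_mul]
    have hdiffbd : |C (K + U ω) - C (K - U ω)| ≤ 2 * L * r ^ 2 + 2 * ‖g‖ * r := by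
      have hid : C (K + U ω) - C (K - U ω)
          = (f (K + U ω) - f K) - (f (K - U ω) - f K) + 2 * (inner ℝ g (U ω) : ℝ) := by
        simp only [hfdef]
        linarith [hφu]
      have hcs : |(inner ℝ g (U ω) : ℝ)| ≤ ‖g‖ * r := by
        calc |(inner ℝ g (U ω) : ℝ)| ≤ ‖g‖ * ‖U ω‖ := abs_real_inner_le_norm g (U ω)
          _ = ‖g‖ * r := by rw [hω]
      rw [hid]
      set I := (inner ℝ g (U ω) : ℝ) with hI
      set A := f (K + U ω) - f K
      set B := f (K - U ω) - f K
      have hb1 : |A| ≤ L * r * r := h1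
      have hb2 : |B| ≤ L * r * r := h2
      have habs1 : |A - B + 2 * I| ≤ |A - B| + |2 * I| := abs_add_le _ _
      have habs2 : |A - B| ≤ |A| + |B| := by
        rw [sub_eq_add_neg]
        simpa using abs_add_le A (-B)
      have habs3 : |2 * I| = 2 * |I| := by
        rw [abs_mul]; norm_num
      rw [habs3] at habs1
      nlinarith
    -- norm of G
    have hGnorm : ‖G ω‖ ≤ d * L * r + d * ‖g‖ := by
      rw [hG ω, norm_smul, hω, Real.norm_eq_abs, abs_mul]
      have hpos : |d / (2 * r ^ 2)| = d / (2 * r ^ 2) := by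
        rw [abs_of_nonneg]
        positivity
      rw [hpos]
      have hdpos : (0:ℝ) ≤ d / (2 * r ^ 2) := by positivity
      have hstep : d / (2 * r ^ 2) * |C (K + U ω) - C (K - U ω)| * r
          ≤ d / (2 * r ^ 2) * (2 * L * r ^ 2 + 2 * ‖g‖ * r) * r :=
        mul_le_mul_of_nonneg_right (mul_le_mul_of_nonneg_left hdiffbd hdpos) hr.le
      calc d / (2 * r ^ 2) * |C (K + U ω) - C (K - U ω)| * r
          ≤ d / (2 * r ^ 2) * (2 * L * r ^ 2 + 2 * ‖g‖ * r) * r := hstep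
        _ = d * L * r + d * ‖g‖ := by
            field_simp
    have hGnn : (0 : ℝ) ≤ ‖G ω‖ := norm_nonneg _
    nlinarith [norm_nonneg g, sq_nonneg (L * r - ‖g‖), sq_nonneg (d * L * r),
      mul_le_mul hGnorm hGnorm hGnn (by positivity : (0:ℝ) ≤ d * L * r + d * ‖g‖)]
  calc ∫ ω, ‖G ω‖ ^ 2 ∂μ
      ≤ ∫ _ω, (8 * d ^ 2 * (L * r) ^ 2 + 2 * d ^ 2 * ‖g‖ ^ 2) ∂μ :=
        integral_mono_ae hint (integrable_const _) hkey
    _ = 8 * d ^ 2 * (L * r) ^ 2 + 2 * d ^ 2 * ‖g‖ ^ 2 := by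
        simp [measure_univ]
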